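/- arXiv:2104.01453 — 2 statements merged into one kernel-verified Lean document; each statement's English description precedes it below -/
import Mathlib

section
/- Let c and n be integers with n ≥ 1, let k ≥ 2 be an integer, and let f(x) = ax + b ∈ ℤ[x] with gcd(a, n) = 1. Then 𝒩_{k,f,c}(n) = n^{k-1} · ∏_{p | n} ((p−1)^k + (−1)^k δ_p)/p^k, where the product is over prime divisors p of n, and δ_p = p − 1 if p divides ac + kb, and δ_p = −1 otherwise. -/
open Polynomial

open Finset

noncomputable def ucount (k n : ℕ) (m : ZMod n) : ℕ :=
  Nat.card {y : Fin k → ZMod n // (∀ i, IsUnit (y i)) ∧ ∑ i, y i = m}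

lemma isUnit_intCast_iff {n : ℕ} (z : ℤ) [NeZero n] :
    IsUnit ((z : ZMod n)) ↔ Int.gcd z n = 1 := by
  rw [← Int.isCoprime_iff_gcd_eq_one]
  constructor
  · intro h
    obtain ⟨u, hu⟩ := h
    set w : ZMod n := ((u⁻¹ : (ZMod n)ˣ) : ZMod n)
    have hw : w * z = 1 := by
      rw [← hu]; exact u.inv_mul
    have key : (n:ℤ) ∣ (w.val:ℤ) * z - 1 := by
      rw [← ZMod.intCast_zmod_eq_zero_iff_dvd]
      push_cast
      rw [ZMod.natCast_val, ZMod.cast_id, hw, sub_self]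
    obtain ⟨t, ht⟩ := key
    exact ⟨(w.val : ℤ), -t, by linarith⟩
  · rintro ⟨u, v, huv⟩
    apply IsUnit.of_mul_eq_one ((u : ZMod n))
    have := congrArg (Int.cast : ℤ → ZMod n) huv
    push_cast at this
    rwa [ZMod.natCast_self, mul_zero, add_zero, mul_comm] at this

open Finset

lemma card_fiber_addHom {G H : Type*} [AddGroup G] [AddGroup H] [Finite G]
    (f : G →+ H) (hf : Function.Surjective f) (t : H) :
    Nat.card {x : G // f x = t} * Nat.card H = Nat.card G := by
  obtain ⟨x₀, hx₀⟩ := hf t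
  have e : {x : G // f x = t} ≃ f.ker := by
    refine ⟨fun x => ⟨x.1 - x₀, ?_⟩, fun y => ⟨y.1 + x₀, ?_⟩, ?_, ?_⟩
    · simp [AddMonoidHom.mem_ker, map_sub, x.2, hx₀]
    · simp [map_add, AddMonoidHom.mem_ker.mp y.2, hx₀]
    · intro x; ext; simp
    · intro y; ext; simp
  rw [Nat.card_congr e]
  have h2 := AddSubgroup.card_eq_card_quotient_mul_card_addSubgroup f.ker
  have e2 : (G ⧸ f.ker) ≃ H :=
    (QuotientAddGroup.quotientKerEquivOfSurjective f hf).toEquiv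
  rw [Nat.card_congr e2] at h2
  rw [h2, Nat.mul_comm]


lemma ncard_filter {α : Type*} [Fintype α] (P : α → Prop) [DecidablePred P] :
    Nat.card {x // P x} = (univ.filter P).card := by
  rw [Nat.card_eq_fintype_card, Fintype.card_subtype]

lemma ucount_eq_filter (k n : ℕ) [NeZero n] (m : ZMod n) :
    ucount k n m =
      (univ.filter (fun y : Fin k → ZMod n =>
        (∀ i, IsUnit (y i)) ∧ ∑ i, y i = m)).card := by
  classical
  rw [ucount, ncard_filter]

lemma ucount_succ (k n : ℕ) [NeZero n] (m : ZMod n) :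
    ucount (k+1) n m =
      ∑ u ∈ univ.filter (fun u : ZMod n => IsUnit u), ucount k n (m - u) := by
  classical
  rw [ucount_eq_filter]
  rw [Finset.card_eq_sum_card_fiberwise
      (f := fun y : Fin (k+1) → ZMod n => y 0)
      (t := univ.filter (fun u : ZMod n => IsUnit u))
      (fun y hy => by
        simp only [mem_coe, mem_filter, mem_univ, true_and] at hy ⊢
        exact hy.1 0)]
  refine Finset.sum_congr rfl fun u hu => ?_
  simp only [mem_filter, mem_univ, true_and] at hu
  rw [ucount_eq_filter]
  apply Finset.card_bij (fun y _ => Fin.tail y)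
  · intro y hy
    simp only [mem_filter, mem_univ, true_and] at hy ⊢
    obtain ⟨⟨h1, h2⟩, h3⟩ := hy
    refine ⟨fun i => h1 _, ?_⟩
    rw [Fin.sum_univ_succ, h3] at h2
    rw [eq_sub_iff_add_eq, add_comm]
    exact h2
  · intro y1 h1 y2 h2 heq
    simp only [mem_filter, mem_univ, true_and] at h1 h2
    funext i
    refine Fin.cases ?_ (fun j => ?_) i
    · rw [h1.2, h2.2]
    · exact congrFun heq j
  · intro z hz
    simp only [mem_filter, mem_univ, true_and] at hz ⊢
    refine ⟨Fin.cons u z, ⟨⟨fun i => ?_, ?_⟩, ?_⟩, ?_⟩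
    · refine Fin.cases ?_ (fun j => ?_) i
      · simpa using hu
      · simpa using hz.1 j
    · rw [Fin.sum_univ_succ]
      simp only [Fin.cons_zero, Fin.cons_succ]
      rw [hz.2, add_sub_cancel]
    · simp
    · simp [Fin.tail_cons]

lemma ucount_one (n : ℕ) [NeZero n] (m : ZMod n) :
    ucount 1 n m = if IsUnit m then 1 else 0 := by
  classical
  rw [ucount_eq_filter]
  have h : (univ.filter (fun y : Fin 1 → ZMod n =>
      (∀ i, IsUnit (y i)) ∧ ∑ i, y i = m)) =
      if IsUnit m then {fun _ => m} else ∅ := by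
    split_ifs with hm
    · ext y
      simp only [mem_filter, mem_univ, true_and, mem_singleton, Fin.sum_univ_one]
      constructor
      · rintro ⟨-, h2⟩
        funext i
        have : i = 0 := Subsingleton.elim _ _
        rw [this, h2]
      · rintro rfl
        exact ⟨fun _ => hm, rfl⟩
    · ext y
      simp only [mem_filter, mem_univ, true_and, notMem_empty, iff_false, not_and,
        Fin.sum_univ_one]
      intro h1 h2
      exact hm (h2 ▸ h1 0)
  rw [h]
  split_ifs <;> simp

section PrimePower
variable {p e : ℕ}

lemma pi_surj (hp : p.Prime) (he : e ≠ 0) :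
    Function.Surjective (ZMod.castHom (dvd_pow_self p he) (ZMod p)) := by
  haveI : NeZero (p ^ e) := ⟨pow_ne_zero e hp.ne_zero⟩
  haveI : NeZero p := ⟨hp.ne_zero⟩
  intro t
  exact ⟨(t.val : ZMod (p ^ e)), by
    rw [map_natCast, ZMod.natCast_zmod_val]⟩

lemma card_fiber (hp : p.Prime) (he : e ≠ 0) (t : ZMod p) :
    Nat.card {x : ZMod (p ^ e) //
      ZMod.castHom (dvd_pow_self p he) (ZMod p) x = t} = p ^ (e - 1) := by
  haveI : NeZero (p ^ e) := ⟨pow_ne_zero e hp.ne_zero⟩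
  haveI : NeZero p := ⟨hp.ne_zero⟩
  have key := card_fiber_addHom
    ((ZMod.castHom (dvd_pow_self p he) (ZMod p)).toAddMonoidHom) (pi_surj hp he) t
  rw [Nat.card_zmod, Nat.card_zmod] at key
  simp only [RingHom.toAddMonoidHom_eq_coe, AddMonoidHom.coe_coe] at key
  have hfe : p ^ e = p ^ (e - 1) * p := by
    rw [← pow_succ]
    congr 1
    omega
  exact Nat.eq_of_mul_eq_mul_right hp.pos (key.trans hfe)

lemma isUnit_iff_pi (hp : p.Prime) (he : e ≠ 0) (x : ZMod (p ^ e)) :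
    IsUnit x ↔ ZMod.castHom (dvd_pow_self p he) (ZMod p) x ≠ 0 := by
  haveI : NeZero (p ^ e) := ⟨pow_ne_zero e hp.ne_zero⟩
  haveI : NeZero p := ⟨hp.ne_zero⟩
  have h1 : IsUnit x ↔ Nat.Coprime x.val (p ^ e) := by
    conv_lhs => rw [← ZMod.natCast_zmod_val x]
    exact ZMod.isUnit_iff_coprime _ _
  have h2 : ZMod.castHom (dvd_pow_self p he) (ZMod p) x = (x.val : ZMod p) := by
    conv_lhs => rw [← ZMod.natCast_zmod_val x]
    rw [map_natCast]
  rw [h1, h2, Ne, ZMod.natCast_eq_zero_iff,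
    Nat.coprime_pow_right_iff (Nat.pos_of_ne_zero he), Nat.coprime_comm]
  exact hp.coprime_iff_not_dvd

end PrimePower
section PrimePower2
open Finset
variable {p e : ℕ} [NeZero p] [NeZero (p ^ e)]

lemma card_units_pp (hp : p.Prime) (he : e ≠ 0) :
    (univ.filter (fun u : ZMod (p ^ e) => IsUnit u)).card = p ^ (e - 1) * (p - 1) := by
  classical
  rw [Finset.card_eq_sum_card_fiberwise
      (f := fun u => ZMod.castHom (dvd_pow_self p he) (ZMod p) u)
      (t := univ.filter (fun t : ZMod p => t ≠ 0))
      (fun u hu => by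
        simp only [mem_coe, mem_filter, mem_univ, true_and] at hu ⊢
        exact (isUnit_iff_pi hp he u).mp hu)]
  have hinner : ∀ t ∈ univ.filter (fun t : ZMod p => t ≠ 0),
      ((univ.filter (fun u : ZMod (p ^ e) => IsUnit u)).filter
        (fun u => ZMod.castHom (dvd_pow_self p he) (ZMod p) u = t)).card = p ^ (e - 1) := by
    intro t ht
    simp only [mem_filter, mem_univ, true_and] at ht
    rw [filter_filter]
    have heq : univ.filter (fun u : ZMod (p ^ e) =>
        IsUnit u ∧ ZMod.castHom (dvd_pow_self p he) (ZMod p) u = t) =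
        univ.filter (fun u : ZMod (p ^ e) =>
          ZMod.castHom (dvd_pow_self p he) (ZMod p) u = t) := by
      ext u
      simp only [mem_filter, mem_univ, true_and, isUnit_iff_pi hp he]
      constructor
      · rintro ⟨-, h⟩; exact h
      · intro h; exact ⟨by rw [h]; exact ht, h⟩
    rw [heq, ← ncard_filter, card_fiber hp he]
  rw [Finset.sum_congr rfl hinner, Finset.sum_const]
  have hcard : (univ.filter (fun t : ZMod p => t ≠ 0)).card = p - 1 := by
    rw [Finset.filter_ne' univ 0, Finset.card_erase_of_mem (mem_univ 0), card_univ,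
      ZMod.card]
  rw [hcard, smul_eq_mul, Nat.mul_comm]

lemma card_bad_pp (hp : p.Prime) (he : e ≠ 0) (m : ZMod (p ^ e)) :
    (univ.filter (fun u : ZMod (p ^ e) => IsUnit u ∧ ¬ IsUnit (m - u))).card
      = if IsUnit m then p ^ (e - 1) else 0 := by
  classical
  by_cases hm : IsUnit m
  · rw [if_pos hm]
    have hpm : ZMod.castHom (dvd_pow_self p he) (ZMod p) m ≠ 0 :=
      (isUnit_iff_pi hp he m).mp hm
    have heq : univ.filter (fun u : ZMod (p ^ e) => IsUnit u ∧ ¬ IsUnit (m - u)) =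
        univ.filter (fun u : ZMod (p ^ e) =>
          ZMod.castHom (dvd_pow_self p he) (ZMod p) u =
            ZMod.castHom (dvd_pow_self p he) (ZMod p) m) := by
      ext u
      simp only [mem_filter, mem_univ, true_and, isUnit_iff_pi hp he, ne_eq, not_not,
        map_sub, sub_eq_zero]
      constructor
      · rintro ⟨-, h⟩; exact h.symm
      · intro h; exact ⟨by rw [h]; exact hpm, h.symm⟩
    rw [heq, ← ncard_filter, card_fiber hp he]
  · rw [if_neg hm, Finset.card_eq_zero, Finset.filter_eq_empty_iff]
    rintro u - ⟨h1, h2⟩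
    apply hm
    rw [isUnit_iff_pi hp he] at h1 ⊢
    rw [isUnit_iff_pi hp he, ne_eq, not_not, map_sub, sub_eq_zero] at h2
    rw [h2]
    exact h1

lemma card_good_pp (hp : p.Prime) (he : e ≠ 0) (m : ZMod (p ^ e)) :
    (univ.filter (fun u : ZMod (p ^ e) => IsUnit u ∧ IsUnit (m - u))).card
      = if IsUnit m then p ^ (e - 1) * (p - 1) - p ^ (e - 1)
        else p ^ (e - 1) * (p - 1) := by
  classical
  have key := Finset.card_filter_add_card_filter_not
    (s := univ.filter (fun u : ZMod (p ^ e) => IsUnit u))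
    (p := fun u => IsUnit (m - u))
  rw [filter_filter, filter_filter, card_units_pp hp he] at key
  have hb := card_bad_pp hp he m
  by_cases hm : IsUnit m
  · rw [if_pos hm] at hb ⊢
    omega
  · rw [if_neg hm] at hb ⊢
    omega

def Aval (p e : ℕ) : ℕ → ℕ × ℕ
  | 0 => (1, 0)
  | (j+1) => ((p ^ (e-1) * (p-1) - p ^ (e-1)) * (Aval p e j).1 + p ^ (e-1) * (Aval p e j).2,
              p ^ (e-1) * (p-1) * (Aval p e j).1)

lemma ucount_pp_two (hp : p.Prime) (he : e ≠ 0) :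
    ∀ j (m : ZMod (p ^ e)),
      ucount (j+1) (p ^ e) m = if IsUnit m then (Aval p e j).1 else (Aval p e j).2 := by
  intro j
  induction j with
  | zero =>
    intro m
    rw [ucount_one]
    rcases em (IsUnit m) with h | h <;> simp [Aval, h]
  | succ j ih =>
    intro m
    classical
    rw [ucount_succ]
    rw [Finset.sum_congr rfl (fun u _ => ih (m - u))]
    rw [Finset.sum_ite, Finset.sum_const, Finset.sum_const, filter_filter, filter_filter,
      card_good_pp hp he, card_bad_pp hp he]
    by_cases hm : IsUnit m
    · rw [if_pos hm, if_pos hm, if_pos hm]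
      simp only [Aval, smul_eq_mul]
    · rw [if_neg hm, if_neg hm, if_neg hm]
      simp only [Aval, smul_eq_mul]
      omega

lemma Aval_cast (hp2 : 2 ≤ p) (j : ℕ) :
    ((Aval p e j).1 : ℚ) =
      (p : ℚ) ^ ((e-1)*j) * (((p:ℚ)-1) ^ (j+1) - (-1:ℚ) ^ (j+1)) / p ∧
    ((Aval p e j).2 : ℚ) =
      (p : ℚ) ^ ((e-1)*j) * (((p:ℚ)-1) ^ (j+1) + (-1:ℚ) ^ (j+1) * ((p:ℚ)-1)) / p := by
  have hp0 : (p:ℚ) ≠ 0 := by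
    have : (0:ℚ) < p := by exact_mod_cast Nat.lt_of_lt_of_le (by norm_num) hp2
    exact this.ne'
  have hc1 : ((p - 1 : ℕ) : ℚ) = (p:ℚ) - 1 := by
    have : (1:ℕ) ≤ p := by omega
    push_cast [this]
    ring
  induction j with
  | zero =>
    refine ⟨?_, ?_⟩
    · simp only [Aval, Nat.cast_one, Nat.mul_zero, pow_zero, pow_one, one_mul]
      field_simp
      ring
    · simp only [Aval, Nat.cast_zero, Nat.mul_zero, pow_zero, pow_one, one_mul]
      field_simp
      ring
  | succ j ih =>
    obtain ⟨ih1, ih2⟩ := ih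
    have hr : (p:ℕ) ^ (e-1) ≤ p ^ (e-1) * (p-1) :=
      Nat.le_mul_of_pos_right _ (by omega)
    have hsub : (((p ^ (e-1) * (p-1) - p ^ (e-1) : ℕ)) : ℚ)
        = (p:ℚ)^(e-1) * ((p:ℚ)-1) - (p:ℚ)^(e-1) := by
      rw [Nat.cast_sub hr]
      push_cast [hc1]
      ring
    have hpow : (p:ℚ) ^ ((e-1)*(j+1)) = (p:ℚ) ^ ((e-1)*j) * (p:ℚ)^(e-1) := by
      rw [Nat.mul_succ, pow_add]
    constructor
    · show (((p ^ (e-1) * (p-1) - p ^ (e-1)) * (Aval p e j).1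
        + p ^ (e-1) * (Aval p e j).2 : ℕ) : ℚ) = _
      push_cast [hsub]
      rw [ih1, ih2, hpow]
      rw [show j + 1 + 1 = (j + 1) + 1 from rfl, pow_succ ((p:ℚ)-1) (j+1),
        pow_succ (-1:ℚ) (j+1)]
      field_simp
      ring
    · show (((p ^ (e-1) * (p-1)) * (Aval p e j).1 : ℕ) : ℚ) = _
      push_cast [hc1]
      rw [ih1, hpow, pow_succ ((p:ℚ)-1) (j+1), pow_succ (-1:ℚ) (j+1)]
      field_simp
      ring

end PrimePower2
section Glue
open Finset
variable {p e : ℕ}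

lemma isUnit_intCast_pp [NeZero (p ^ e)] (hp : p.Prime) (he : e ≠ 0) (M : ℤ) :
    IsUnit ((M : ZMod (p ^ e))) ↔ ¬ (p:ℤ) ∣ M := by
  rw [isUnit_intCast_iff]
  have habs : Int.gcd M ((p ^ e : ℕ) : ℤ) = Nat.gcd M.natAbs (p ^ e) := by
    rw [Int.gcd]
    simp [Int.natAbs_pow]
  rw [habs]
  have hdd : (p:ℤ) ∣ M ↔ p ∣ M.natAbs := Int.natCast_dvd
  rw [hdd]
  have : Nat.gcd M.natAbs (p ^ e) = 1 ↔ Nat.Coprime M.natAbs (p ^ e) := Iff.rfl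
  rw [this, Nat.coprime_pow_right_iff (Nat.pos_of_ne_zero he), Nat.coprime_comm]
  exact hp.coprime_iff_not_dvd

lemma ucount_pp [NeZero p] [NeZero (p ^ e)] (hp : p.Prime) (he : e ≠ 0)
    (k : ℕ) (hk : 1 ≤ k) (M : ℤ) :
    (ucount k (p ^ e) ((M : ZMod (p ^ e))) : ℚ) =
      (p:ℚ) ^ ((e-1)*(k-1)) *
        (((p:ℚ)-1) ^ k + (-1:ℚ) ^ k * (if (p:ℤ) ∣ M then (p:ℚ)-1 else -1)) / p := by
  obtain ⟨j, rfl⟩ : ∃ j, k = j + 1 := ⟨k - 1, by omega⟩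
  rw [ucount_pp_two hp he j]
  have hj : j + 1 - 1 = j := by omega
  rw [hj]
  by_cases hd : (p:ℤ) ∣ M
  · rw [if_neg (by rw [isUnit_intCast_pp hp he]; exact fun h => h hd), if_pos hd,
      (Aval_cast hp.two_le j).2]
  · rw [if_pos ((isUnit_intCast_pp hp he M).mpr hd), if_neg hd,
      (Aval_cast hp.two_le j).1]
    ring

lemma ucount_one_mod (k : ℕ) (m : ZMod 1) : ucount k 1 m = 1 := by
  haveI : Unique {y : Fin k → ZMod 1 // (∀ i, IsUnit (y i)) ∧ ∑ i, y i = m} :=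
    { default := ⟨fun _ => 0, fun _ => isUnit_of_subsingleton _, Subsingleton.elim _ _⟩,
      uniq := fun y => Subtype.ext (funext fun i => Subsingleton.elim _ _) }
  exact Nat.card_unique

lemma isUnit_pair {α β : Type*} [Monoid α] [Monoid β] {x : α} {y : β}
    (hx : IsUnit x) (hy : IsUnit y) : IsUnit ((x, y) : α × β) := by
  obtain ⟨u, rfl⟩ := hx
  obtain ⟨v, rfl⟩ := hy
  exact ⟨⟨((u : α), (v : β)), ((↑u⁻¹ : α), (↑v⁻¹ : β)),
    by ext <;> simp, by ext <;> simp⟩, rfl⟩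

lemma ucount_mul (k : ℕ) {m n : ℕ} (hmn : m.Coprime n) (M : ℤ) :
    ucount k (m * n) ((M : ZMod (m * n))) =
      ucount k m ((M : ZMod m)) * ucount k n ((M : ZMod n)) := by
  set φ := ZMod.chineseRemainder hmn with hφ
  have hM : φ ((M : ZMod (m * n))) = ((M : ZMod m), (M : ZMod n)) := by
    rw [map_intCast]
    exact Prod.ext (Prod.fst_intCast M) (Prod.snd_intCast M)
  have hMsymm : φ.symm ((M : ZMod m), (M : ZMod n)) = (M : ZMod (m * n)) := by
    rw [← hM, RingEquiv.symm_apply_apply]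
  rw [ucount, ucount, ucount, ← Nat.card_prod]
  apply Nat.card_congr
  refine ⟨fun y =>
      (⟨fun i => (φ (y.1 i)).1, fun i => ((y.2.1 i).map φ.toRingHom).map (RingHom.fst _ _), ?_⟩,
       ⟨fun i => (φ (y.1 i)).2, fun i => ((y.2.1 i).map φ.toRingHom).map (RingHom.snd _ _), ?_⟩),
    fun z => ⟨fun i => φ.symm (z.1.1 i, z.2.1 i),
      fun i => ((isUnit_pair (z.1.2.1 i) (z.2.2.1 i)).map φ.symm.toRingHom), ?_⟩,
    ?_, ?_⟩
  · rw [← Prod.fst_sum, ← map_sum, y.2.2, hM]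
  · rw [← Prod.snd_sum, ← map_sum, y.2.2, hM]
  · rw [← map_sum, ← hMsymm]
    congr 1
    refine Prod.ext ?_ ?_
    · rw [Prod.fst_sum]
      simpa using z.1.2.2
    · rw [Prod.snd_sum]
      simpa using z.2.2.2
  · intro y
    apply Subtype.ext
    funext i
    simp
  · intro z
    refine Prod.ext (Subtype.ext (funext fun i => ?_)) (Subtype.ext (funext fun i => ?_)) <;>
      simp
end Glue
section ProdFormula
open Finset

lemma ucount_eq_prod (k : ℕ) (hk : 1 ≤ k) (M : ℤ) :
    ∀ n : ℕ, n ≠ 0 → (ucount k n ((M : ZMod n)) : ℚ) =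
      ∏ p ∈ n.primeFactors,
        (p:ℚ) ^ ((n.factorization p - 1)*(k-1)) *
          (((p:ℚ)-1) ^ k + (-1:ℚ) ^ k * (if (p:ℤ) ∣ M then (p:ℚ)-1 else -1)) / p := by
  intro n
  induction n using Nat.recOnPosPrimePosCoprime with
  | prime_pow p e hp he =>
    intro _
    have hp' : p.Prime := hp
    haveI : NeZero p := ⟨hp'.ne_zero⟩
    haveI : NeZero (p ^ e) := ⟨pow_ne_zero e hp'.ne_zero⟩
    rw [ucount_pp hp' he.ne' k hk M]
    rw [Nat.primeFactors_pow p he.ne', Nat.Prime.primeFactors hp', prod_singleton]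
    rw [hp'.factorization_pow, Finsupp.single_eq_same]
  | zero => intro h; exact absurd rfl h
  | one =>
    intro _
    rw [ucount_one_mod k]
    simp
  | coprime a b ha hb hab iha ihb =>
    intro _
    have ha0 : a ≠ 0 := by omega
    have hb0 : b ≠ 0 := by omega
    rw [ucount_mul k hab M, Nat.cast_mul, iha ha0, ihb hb0,
      Nat.primeFactors_mul ha0 hb0, Finset.prod_union hab.disjoint_primeFactors]
    congr 1
    · refine Finset.prod_congr rfl fun q hq => ?_
      have hfac : (a*b).factorization q = a.factorization q := by
        rw [Nat.factorization_mul ha0 hb0, Finsupp.add_apply]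
        have hq' : q ∉ b.primeFactors :=
          Finset.disjoint_left.mp hab.disjoint_primeFactors hq
        rw [← Nat.support_factorization] at hq'
        rw [Finsupp.notMem_support_iff.mp hq', add_zero]
      rw [hfac]
    · refine Finset.prod_congr rfl fun q hq => ?_
      have hfac : (a*b).factorization q = b.factorization q := by
        rw [Nat.factorization_mul ha0 hb0, Finsupp.add_apply]
        have hq' : q ∉ a.primeFactors :=
          Finset.disjoint_right.mp hab.disjoint_primeFactors hq
        rw [← Nat.support_factorization] at hq'
        rw [Finsupp.notMem_support_iff.mp hq', zero_add]
      rw [hfac]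
end ProdFormula

/-- `Ncount k f c n` is the number of tuples `(x_1,...,x_k) ∈ {0,...,n-1}^k` with
`gcd(f(x_i), n) = 1` for all `i` and `x_1 + ... + x_k ≡ c (mod n)`. -/
noncomputable def Ncount (k : ℕ) (f : Polynomial ℤ) (c : ℤ) (n : ℕ) : ℕ :=
  Nat.card {x : Fin k → ℤ //
    (∀ i, 0 ≤ x i ∧ x i < n) ∧
    (∀ i, Int.gcd (f.eval (x i)) n = 1) ∧
    (n : ℤ) ∣ (∑ i, x i) - c}

section NcountEq
variable {n : ℕ} [NeZero n] (a b c : ℤ)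

lemma gcd_affine_iff (z : ℤ) :
    Int.gcd (a * z + b) n = 1 ↔ IsUnit ((a : ZMod n) * (z : ZMod n) + (b : ZMod n)) := by
  rw [show ((a:ZMod n) * (z:ZMod n) + (b:ZMod n)) = ((a*z+b : ℤ) : ZMod n) by push_cast; ring]
  exact (isUnit_intCast_iff _).symm

lemma Ncount_eq_ucount (k : ℕ) (ha : IsUnit ((a : ZMod n))) :
    Ncount k (C a * X + C b) c n = ucount k n (((a * c + k * b : ℤ) : ZMod n)) := by
  rw [Ncount, ucount]
  apply Nat.card_congr
  have heval : ∀ z : ℤ, (C a * X + C b).eval z = a * z + b := by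
    intro z; simp
  have hM : ((a * c + (k:ℤ) * b : ℤ) : ZMod n)
      = (a:ZMod n) * (c:ZMod n) + (k:ℕ) * (b:ZMod n) := by
    push_cast; ring
  set u := ha.unit with hu
  have hua : (↑u : ZMod n) = (a : ZMod n) := ha.unit_spec
  refine Equiv.trans (Equiv.subtypeEquivRight (q := fun x : Fin k → ℤ =>
      (∀ i, 0 ≤ x i ∧ x i < n) ∧
      (∀ i, Int.gcd (a * x i + b) n = 1) ∧
      (n : ℤ) ∣ (∑ i, x i) - c) (fun x => by simp only [heval])) ?_
  refine Equiv.trans (Equiv.trans ?_ (Equiv.subtypeEquivRight (p := fun x : Fin k → ZMod n =>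
      (∀ i, IsUnit ((a:ZMod n) * x i + (b:ZMod n))) ∧ ∑ i, x i = (c : ZMod n))
      (q := fun x : Fin k → ZMod n =>
      (∀ i, IsUnit ((a:ZMod n) * x i + (b:ZMod n))) ∧ ∑ i, x i = (c : ZMod n))
      (fun x => Iff.rfl))) ?_
  · -- integers to ZMod
    refine ⟨fun x => ⟨fun i => ((x.1 i : ℤ) : ZMod n), ?_, ?_⟩,
      fun y => ⟨fun i => (((y.1 i).val : ℕ) : ℤ), ?_, ?_, ?_⟩, ?_, ?_⟩
    · intro i
      exact (gcd_affine_iff a b (x.1 i)).mp (x.2.2.1 i)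
    · have h0 : ((((∑ i, x.1 i) - c : ℤ)) : ZMod n) = 0 :=
        (ZMod.intCast_zmod_eq_zero_iff_dvd _ n).mpr x.2.2.2
      push_cast at h0
      rw [sub_eq_zero] at h0
      exact h0
    · intro i
      show (0:ℤ) ≤ (((y.1 i).val : ℕ) : ℤ) ∧ (((y.1 i).val : ℕ) : ℤ) < (n:ℤ)
      exact ⟨Int.natCast_nonneg _, by exact_mod_cast ZMod.val_lt (y.1 i)⟩
    · intro i
      rw [gcd_affine_iff a b]
      rw [show ((((y.1 i).val : ℤ)) : ZMod n) = y.1 i by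
        push_cast; exact ZMod.natCast_zmod_val (y.1 i)]
      exact y.2.1 i
    · rw [← ZMod.intCast_zmod_eq_zero_iff_dvd]
      push_cast
      rw [sub_eq_zero]
      calc (∑ i, (((y.1 i).val : ℕ) : ZMod n)) = ∑ i, y.1 i := by
            refine Finset.sum_congr rfl fun i _ => ZMod.natCast_zmod_val (y.1 i)
        _ = (c : ZMod n) := y.2.2
    · intro x
      apply Subtype.ext
      funext i
      show ((((x.1 i : ℤ) : ZMod n)).val : ℤ) = x.1 i
      rw [ZMod.val_intCast]
      exact Int.emod_eq_of_lt (x.2.1 i).1 (x.2.1 i).2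
    · intro y
      apply Subtype.ext
      funext i
      push_cast
      exact ZMod.natCast_zmod_val (y.1 i)
  · -- affine substitution
    have hexp : ∀ z : ZMod n, (a:ZMod n) * (↑u⁻¹ * (z - b)) + b = z := by
      intro z
      rw [← hua, ← mul_assoc, Units.mul_inv, one_mul, sub_add_cancel]
    have hinv : ∀ z : ZMod n, (↑u⁻¹ : ZMod n) * ((a:ZMod n) * z) = z := by
      intro z
      rw [← hua, ← mul_assoc, Units.inv_mul, one_mul]
    refine ⟨fun x => ⟨fun i => (a:ZMod n) * x.1 i + b, fun i => x.2.1 i, ?_⟩,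
      fun y => ⟨fun i => ↑u⁻¹ * (y.1 i - b), ?_, ?_⟩, ?_, ?_⟩
    · rw [Finset.sum_add_distrib, ← Finset.mul_sum, x.2.2, Finset.sum_const,
        Finset.card_univ, Fintype.card_fin, hM, nsmul_eq_mul]
    · intro i
      rw [hexp]
      exact y.2.1 i
    · have := y.2.2
      rw [← Finset.mul_sum, Finset.sum_sub_distrib, this, hM, Finset.sum_const,
        Finset.card_univ, Fintype.card_fin, nsmul_eq_mul, add_sub_cancel_right]
      exact hinv _
    · intro x
      apply Subtype.ext
      funext i
      show (↑u⁻¹ : ZMod n) * (((a:ZMod n) * x.1 i + b) - b) = x.1 i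
      rw [add_sub_cancel_right]
      exact hinv _
    · intro y
      apply Subtype.ext
      funext i
      exact hexp (y.1 i)
end NcountEq


theorem Ncount_linear (k : ℕ) (hk : 2 ≤ k) (c : ℤ) (n : ℕ) (hn : 0 < n)
    (a b : ℤ) (ha : Int.gcd a n = 1) :
    (Ncount k (C a * X + C b) c n : ℚ) =
      (n : ℚ) ^ (k - 1) *
        ∏ p ∈ n.primeFactors,
          (((p : ℚ) - 1) ^ k +
            (-1 : ℚ) ^ k *
              (if (p : ℤ) ∣ (a * c + k * b) then (p : ℚ) - 1 else -1)) / (p : ℚ) ^ k := by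
  haveI : NeZero n := ⟨hn.ne'⟩
  have ha' : IsUnit ((a : ZMod n)) := (isUnit_intCast_iff a).mpr ha
  rw [Ncount_eq_ucount a b c k ha']
  rw [ucount_eq_prod k (by omega) (a*c+k*b) n hn.ne']
  have hn' : (n:ℚ) = ∏ p ∈ n.primeFactors, (p:ℚ) ^ (n.factorization p) := by
    conv_lhs => rw [← Nat.factorization_prod_pow_eq_self hn.ne']
    rw [Nat.prod_factorization_eq_prod_primeFactors]
    push_cast
    rfl
  have hpow : ((n:ℚ)) ^ (k-1) = ∏ p ∈ n.primeFactors, (p:ℚ) ^ (n.factorization p * (k-1)) := by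
    rw [hn', ← Finset.prod_pow]
    exact Finset.prod_congr rfl fun p _ => (pow_mul _ _ _).symm
  rw [hpow, ← Finset.prod_mul_distrib]
  apply Finset.prod_congr rfl
  intro p hp
  have hp0 : (p:ℚ) ≠ 0 := by
    have := (Nat.prime_of_mem_primeFactors hp).pos
    positivity
  have hep : n.factorization p ≠ 0 := by
    rw [← Finsupp.mem_support_iff, Nat.support_factorization]
    exact hp
  obtain ⟨e', he'⟩ : ∃ e', n.factorization p = e' + 1 :=
    ⟨n.factorization p - 1, by omega⟩
  obtain ⟨k', hk'⟩ : ∃ k', k = k' + 1 := ⟨k - 1, by omega⟩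
  rw [he', hk']
  simp only [Nat.add_sub_cancel]
  have h1 : (p:ℚ) ^ ((e'+1)*k') = p ^ (e'*k') * p ^ k' := by
    rw [← pow_add]
    congr 1
    ring
  have h2 : (p:ℚ) ^ (k'+1) = p ^ k' * p := pow_succ _ _
  rw [h1, h2]
  field_simp
end

section
/- Let p be a prime, let k ≥ 2 and c be integers, and let a, b ∈ ℤ_p with a ≠ b. Then the number of tuples (x_1,...,x_k) ∈ (ℤ_p \ {a, b})^k with x_1 + ... + x_k ≡ c (mod p) equals ((−1)^k / p) · ( p · Σ_{0 ≤ j ≤ k, (a−b) j ≡ c − bk (mod p)} C(k, j) + (2 − p)^k − 2^k ). -/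
open Finset

private def cnt (p : ℕ) [NeZero p] (A B : ZMod p) (k : ℕ) (c : ZMod p) : ℚ :=
  ∑ y : Fin k → ZMod p, if (∀ i, y i ≠ A ∧ y i ≠ B) ∧ ∑ i, y i = c then 1 else 0

private def Tf (p : ℕ) (A B : ZMod p) (k : ℕ) (c : ZMod p) : ℚ :=
  ∑ j ∈ Finset.range (k+1),
    if (A - B) * (j : ZMod p) = c - B * (k : ZMod p) then (k.choose j : ℚ) else 0

private lemma cnt_total (p : ℕ) [NeZero p] (A B : ZMod p) (hAB : A ≠ B) (hp2 : 2 ≤ p)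
    (k : ℕ) : ∑ c : ZMod p, cnt p A B k c = ((p : ℚ) - 2) ^ k := by
  unfold cnt
  rw [Finset.sum_comm]
  have h1 : ∀ y : Fin k → ZMod p,
      (∑ c : ZMod p, if (∀ i, y i ≠ A ∧ y i ≠ B) ∧ ∑ i, y i = c then (1:ℚ) else 0)
      = if (∀ i, y i ≠ A ∧ y i ≠ B) then 1 else 0 := by
    intro y
    by_cases hP : ∀ i, y i ≠ A ∧ y i ≠ B <;> simp [hP]
  rw [Finset.sum_congr rfl fun y _ => h1 y]
  have h2 : ∀ y : Fin k → ZMod p,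
      (if (∀ i, y i ≠ A ∧ y i ≠ B) then (1:ℚ) else 0)
      = ∏ i, if y i ≠ A ∧ y i ≠ B then (1:ℚ) else 0 := by
    intro y
    by_cases hP : ∀ i, y i ≠ A ∧ y i ≠ B
    · simp [hP]
    · push_neg at hP
      rw [if_neg]
      · obtain ⟨i, hi⟩ : ∃ i, ¬ (y i ≠ A ∧ y i ≠ B) := by
          by_contra h; push_neg at h
          exact absurd (fun i => (h i)) (by simpa using hP)
        exact (Finset.prod_eq_zero (Finset.mem_univ i) (by simp [hi])).symm
      · simpa using hP
  rw [Finset.sum_congr rfl fun y _ => h2 y]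
  have hps := Finset.prod_univ_sum (fun _ : Fin k => (Finset.univ : Finset (ZMod p)))
    (fun _ z => if z ≠ A ∧ z ≠ B then (1:ℚ) else 0)
  rw [Fintype.piFinset_univ] at hps
  rw [← hps]
  have h3 : (∑ z : ZMod p, if z ≠ A ∧ z ≠ B then (1:ℚ) else 0) = (p : ℚ) - 2 := by
    rw [Finset.sum_boole]
    have : (Finset.univ.filter fun z : ZMod p => z ≠ A ∧ z ≠ B) = Finset.univ \ {A, B} := by
      ext z; simp [and_comm]
    rw [this, Finset.card_sdiff_of_subset (by simp)]
    have hc : ({A, B} : Finset (ZMod p)).card = 2 := by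
      rw [Finset.card_insert_of_notMem (by simpa using hAB), Finset.card_singleton]
    rw [hc, Finset.card_univ, ZMod.card]
    have : (2:ℕ) ≤ p := hp2
    push_cast [Nat.cast_sub this]
    ring
  simp [h3]

private lemma cnt_succ (p : ℕ) [NeZero p] (A B : ZMod p) (hAB : A ≠ B) (hp2 : 2 ≤ p)
    (k : ℕ) (c : ZMod p) :
    cnt p A B (k+1) c = ((p : ℚ) - 2) ^ k - cnt p A B k (c - A) - cnt p A B k (c - B) := by
  have step1 : cnt p A B (k+1) c
      = ∑ z : ZMod p, if z ≠ A ∧ z ≠ B then cnt p A B k (c - z) else 0 := by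
    unfold cnt
    set g := fun y : Fin (k+1) → ZMod p =>
        if (∀ i, y i ≠ A ∧ y i ≠ B) ∧ ∑ i, y i = c then (1:ℚ) else 0 with hg
    have he := Fintype.sum_equiv (Fin.consEquiv fun _ : Fin (k+1) => ZMod p)
      (fun zw => g ((Fin.consEquiv fun _ : Fin (k+1) => ZMod p) zw)) g (fun zw => rfl)
    rw [← he, Fintype.sum_prod_type]
    simp only [Fin.consEquiv_apply, hg]
    refine Finset.sum_congr rfl fun z _ => ?_
    by_cases hz : z ≠ A ∧ z ≠ B
    · rw [if_pos hz]
      refine Finset.sum_congr rfl fun w _ => ?_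
      congr 1
      rw [Fin.forall_fin_succ]
      simp only [Fin.cons_zero, Fin.cons_succ, Fin.sum_cons]
      rw [eq_iff_iff]
      constructor
      · rintro ⟨⟨-, h2⟩, h3⟩
        exact ⟨h2, by rw [← h3]; ring⟩
      · rintro ⟨h2, h3⟩
        exact ⟨⟨hz, h2⟩, by rw [h3]; ring⟩
    · rw [if_neg hz]
      refine Finset.sum_eq_zero fun w _ => ?_
      rw [if_neg]
      rw [Fin.forall_fin_succ]
      simp only [Fin.cons_zero]
      tauto
  rw [step1]
  have split : ∀ z : ZMod p, (if z ≠ A ∧ z ≠ B then cnt p A B k (c - z) else 0)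
      = cnt p A B k (c - z) - (if z = A then cnt p A B k (c - z) else 0)
        - (if z = B then cnt p A B k (c - z) else 0) := by
    intro z
    by_cases h1 : z = A
    · subst h1; simp [hAB]
    · by_cases h2 : z = B
      · subst h2; simp [h1]
      · simp [h1, h2]
  rw [Finset.sum_congr rfl fun z _ => split z]
  rw [Finset.sum_sub_distrib, Finset.sum_sub_distrib]
  rw [Finset.sum_ite_eq' Finset.univ A (fun z => cnt p A B k (c - z)),
      Finset.sum_ite_eq' Finset.univ B (fun z => cnt p A B k (c - z))]
  simp only [Finset.mem_univ, if_true]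
  congr 2
  rw [← cnt_total p A B hAB hp2 k]
  exact Fintype.sum_equiv (Equiv.subLeft c) _ _ (fun z => rfl)

private lemma Tf_succ (p : ℕ) (A B : ZMod p) (k : ℕ) (c : ZMod p) :
    Tf p A B (k+1) c = Tf p A B k (c - A) + Tf p A B k (c - B) := by
  unfold Tf
  push_cast
  have hcondA : ∀ j : ℕ, ((A - B) * (j : ZMod p) = c - A - B * (k : ZMod p))
      ↔ ((A - B) * ((j : ZMod p) + 1) = c - B * ((k : ZMod p) + 1)) := by
    intro j; constructor <;> intro h <;> linear_combination h
  have hA : (∑ j ∈ Finset.range (k+1),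
        if (A - B) * (j : ZMod p) = c - A - B * (k : ZMod p) then (k.choose j : ℚ) else 0)
      = ∑ j ∈ Finset.range (k+1),
        if (A - B) * ((j : ZMod p) + 1) = c - B * ((k : ZMod p) + 1) then (k.choose j : ℚ)
        else 0 := by
    refine Finset.sum_congr rfl fun j _ => ?_
    simp only [hcondA j]
  rw [hA]
  rw [Finset.sum_range_succ' (fun j => if (A - B) * (j : ZMod p) = c - B * ((k : ZMod p) + 1)
      then ((k+1).choose j : ℚ) else 0) (k+1)]
  have hsplit : ∀ j : ℕ, (if (A - B) * ((j+1 : ℕ) : ZMod p) = c - B * ((k : ZMod p) + 1)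
      then (((k+1).choose (j+1) : ℕ) : ℚ) else 0)
      = (if (A - B) * ((j : ZMod p) + 1) = c - B * ((k : ZMod p) + 1)
          then (k.choose j : ℚ) else 0)
        + (if (A - B) * ((j : ZMod p) + 1) = c - B * ((k : ZMod p) + 1)
          then (k.choose (j+1) : ℚ) else 0) := by
    intro j
    rw [Nat.choose_succ_succ]
    push_cast
    by_cases h : (A - B) * ((j : ZMod p) + 1) = c - B * ((k : ZMod p) + 1) <;>
      simp [h]
  rw [Finset.sum_congr rfl fun j _ => hsplit j, Finset.sum_add_distrib]
  have hB : (∑ j ∈ Finset.range (k+1),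
        if (A - B) * (j : ZMod p) = c - B - B * (k : ZMod p) then (k.choose j : ℚ) else 0)
      = (∑ j ∈ Finset.range (k+1),
          if (A - B) * ((j : ZMod p) + 1) = c - B * ((k : ZMod p) + 1)
          then (k.choose (j+1) : ℚ) else 0)
        + if (A - B) * ((0 : ℕ) : ZMod p) = c - B * ((k : ZMod p) + 1)
          then ((k+1).choose 0 : ℚ) else 0 := by
    have hc : ∀ j : ℕ, ((A - B) * (j : ZMod p) = c - B - B * (k : ZMod p))
        ↔ ((A - B) * (j : ZMod p) = c - B * ((k : ZMod p) + 1)) := by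
      intro j
      constructor <;> intro h <;> rw [h] <;> ring
    rw [show (∑ j ∈ Finset.range (k+1),
        if (A - B) * (j : ZMod p) = c - B - B * (k : ZMod p) then (k.choose j : ℚ) else 0)
        = ∑ j ∈ Finset.range (k+1),
        if (A - B) * (j : ZMod p) = c - B * ((k : ZMod p) + 1) then (k.choose j : ℚ) else 0
      from Finset.sum_congr rfl fun j _ => if_congr (hc j) rfl rfl]
    rw [Finset.sum_range_succ' (fun j => if (A - B) * (j : ZMod p) = c - B * ((k : ZMod p) + 1)
        then (k.choose j : ℚ) else 0) k]
    congr 1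
    · rw [Finset.sum_range_succ]
      rw [Nat.choose_succ_self, Nat.cast_zero, ite_self, add_zero]
      push_cast
      rfl
    · simp
  rw [hB]
  push_cast
  ring

private lemma cnt_eq (p : ℕ) [NeZero p] (A B : ZMod p) (hAB : A ≠ B) (hp2 : 2 ≤ p)
    (k : ℕ) (c : ZMod p) :
    cnt p A B k c = ((-1:ℚ)^k / p) *
      ((p : ℚ) * Tf p A B k c + (2 - (p:ℚ))^k - 2^k) := by
  have hp0 : (p : ℚ) ≠ 0 := by
    have : 0 < p := by omega
    positivity
  induction k generalizing c with
  | zero =>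
    have h1 : cnt p A B 0 c = if (0 : ZMod p) = c then 1 else 0 := by
      simp [cnt]
    have h2 : Tf p A B 0 c = if (0 : ZMod p) = c then 1 else 0 := by
      simp [Tf]
    rw [h1, h2]
    field_simp
    ring
  | succ k ih =>
    rw [cnt_succ p A B hAB hp2 k c, ih, ih, Tf_succ]
    have key : ((p:ℚ) - 2)^k = (-1)^k * (2 - (p:ℚ))^k := by
      rw [← mul_pow]
      congr 1
      ring
    rw [key]
    field_simp
    ring

private lemma val_intCast' (p : ℕ) [NeZero p] (x : ℤ) (h0 : 0 ≤ x) (h1 : x < p) :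
    (((x : ZMod p).val : ℤ)) = x := by
  lift x to ℕ using h0 with n
  rw [Int.cast_natCast, ZMod.val_natCast_of_lt (by exact_mod_cast h1)]

private lemma intCast_inj' (p : ℕ) [NeZero p] (x y : ℤ) (hx0 : 0 ≤ x) (hx1 : x < p)
    (hy0 : 0 ≤ y) (hy1 : y < p) : (x : ZMod p) = (y : ZMod p) ↔ x = y := by
  constructor
  · intro h
    have := val_intCast' p x hx0 hx1
    rw [h, val_intCast' p y hy0 hy1] at this
    exact this.symm
  · intro h; rw [h]

private lemma cnt_card (p : ℕ) [NeZero p] (A B : ZMod p) (k : ℕ) (c : ZMod p) :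
    (Nat.card {y : Fin k → ZMod p // (∀ i, y i ≠ A ∧ y i ≠ B) ∧ ∑ i, y i = c} : ℚ)
      = cnt p A B k c := by
  rw [Nat.card_eq_fintype_card, Fintype.card_subtype]
  unfold cnt
  rw [Finset.sum_boole]

theorem count_sum_avoiding_two (p : ℕ) (hp : p.Prime) (k : ℕ) (hk : 2 ≤ k) (c : ℤ)
    (a b : ℤ) (ha : 0 ≤ a) (ha' : a < p) (hb : 0 ≤ b) (hb' : b < p) (hab : a ≠ b) :
    (Nat.card {x : Fin k → ℤ //
        (∀ i, 0 ≤ x i ∧ x i < p ∧ x i ≠ a ∧ x i ≠ b) ∧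
        (p : ℤ) ∣ (∑ i, x i) - c} : ℚ) =
      ((-1 : ℚ) ^ k / p) *
        ((p : ℚ) *
          (∑ j ∈ Finset.range (k + 1),
            if (p : ℤ) ∣ ((a - b) * j - (c - b * k)) then (k.choose j : ℚ) else 0) +
          (2 - (p : ℚ)) ^ k - 2 ^ k) := by
  haveI : NeZero p := ⟨hp.ne_zero⟩
  have hp2 : 2 ≤ p := hp.two_le
  have hAB : (a : ZMod p) ≠ (b : ZMod p) := by
    rw [Ne, intCast_inj' p a b ha ha' hb hb']
    exact hab
  have E : {x : Fin k → ℤ //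
        (∀ i, 0 ≤ x i ∧ x i < p ∧ x i ≠ a ∧ x i ≠ b) ∧
        (p : ℤ) ∣ (∑ i, x i) - c} ≃
      {y : Fin k → ZMod p //
        (∀ i, y i ≠ (a : ZMod p) ∧ y i ≠ (b : ZMod p)) ∧ ∑ i, y i = (c : ZMod p)} := by
    refine ⟨fun x => ⟨fun i => ((x.1 i : ZMod p)), ?_, ?_⟩,
      fun y => ⟨fun i => ((y.1 i).val : ℤ), ?_, ?_⟩, ?_, ?_⟩
    · intro i
      obtain ⟨h0, h1, h2, h3⟩ := x.2.1 i
      constructor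
      · rw [Ne, intCast_inj' p _ a h0 h1 ha ha']; exact h2
      · rw [Ne, intCast_inj' p _ b h0 h1 hb hb']; exact h3
    · have : (((∑ i, x.1 i) - c : ℤ) : ZMod p) = 0 :=
        (ZMod.intCast_zmod_eq_zero_iff_dvd _ p).mpr x.2.2
      push_cast at this
      rw [sub_eq_zero] at this
      exact this
    · intro i
      obtain ⟨hy1, hy2⟩ := y.2.1 i
      have h0 : (0:ℤ) ≤ ((y.1 i).val : ℤ) := Int.natCast_nonneg _
      have h1 : (((y.1 i).val : ℤ)) < p := by exact_mod_cast (y.1 i).val_lt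
      have hval : ((((y.1 i).val : ℤ)) : ZMod p) = y.1 i := by
        push_cast
        exact ZMod.natCast_rightInverse (y.1 i)
      refine ⟨h0, h1, ?_, ?_⟩
      · intro hcon
        have : ((((y.1 i).val : ℤ)) : ZMod p) = (a : ZMod p) := by
          exact_mod_cast congrArg (fun z : ℤ => (z : ZMod p)) hcon
        exact hy1 (hval ▸ this)
      · intro hcon
        have : ((((y.1 i).val : ℤ)) : ZMod p) = (b : ZMod p) := by
          exact_mod_cast congrArg (fun z : ℤ => (z : ZMod p)) hcon
        exact hy2 (hval ▸ this)
    · rw [← ZMod.intCast_zmod_eq_zero_iff_dvd]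
      push_cast
      rw [sub_eq_zero]
      have : ∀ i, (((y.1 i).val : ℕ) : ZMod p) = y.1 i :=
        fun i => ZMod.natCast_rightInverse (y.1 i)
      rw [Finset.sum_congr rfl fun i _ => this i]
      exact y.2.2
    · intro x
      ext i
      exact val_intCast' p (x.1 i) (x.2.1 i).1 (x.2.1 i).2.1
    · intro y
      ext i
      simp only
      push_cast
      exact ZMod.natCast_rightInverse (y.1 i)
  have hsum : (∑ j ∈ Finset.range (k + 1),
        if (p : ℤ) ∣ ((a - b) * j - (c - b * k)) then (k.choose j : ℚ) else 0)
      = Tf p (a : ZMod p) (b : ZMod p) k (c : ZMod p) := by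
    unfold Tf
    refine Finset.sum_congr rfl fun j _ => if_congr ?_ rfl rfl
    rw [← ZMod.intCast_zmod_eq_zero_iff_dvd,
      ← sub_eq_zero (b := (c : ZMod p) - (b : ZMod p) * (k : ZMod p))]
    constructor <;> intro h
    · push_cast at h; linear_combination h
    · push_cast; linear_combination h
  rw [Nat.card_congr E, cnt_card, cnt_eq p _ _ hAB hp2, hsum]
end
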